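/- Let $g_2(r_4) = -\frac{4(r_4-1)^3(r_4+1)^2(r_4^2+r_4+1)}{r_4^4 + 16r_4^3 - 2r_4^2 + 1}$. Then for all $r_4 \in (0, 1)$, $0 < g_2(r_4) < 4$, with $g_2(1) = 0$ and $\lim_{r_4 \to 0^+} g_2(r_4) = 4$. -/
import Mathlib


open Filter Topology

/-- The function `g2` giving `m3` for collinear Euler-Lagrange points with `0 < r4 < 1`. -/
noncomputable def g2 (r4 : ℝ) : ℝ :=
  -(4 * (r4 - 1)^3 * (r4 + 1)^2 * (r4^2 + r4 + 1)) / (r4^4 + 16*r4^3 - 2*r4^2 + 1)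

lemma g2_den_pos (r : ℝ) (h : 0 < r) : 0 < r^4 + 16*r^3 - 2*r^2 + 1 := by
  nlinarith [sq_nonneg (1 - r^2), pow_pos h 3]

/-- for `0 < r4 < 1` we have `0 < g2 r4 < 4`; moreover `g2 1 = 0` and
`g2 r4 → 4` as `r4 → 0⁺`. -/
theorem g2_range :
    (∀ r4 : ℝ, 0 < r4 → r4 < 1 → (0 < g2 r4 ∧ g2 r4 < 4)) ∧
    g2 1 = 0 ∧
    Tendsto g2 (𝓝[>] 0) (𝓝 4) := by
  refine ⟨fun r h0 h1 => ?_, by norm_num [g2], ?_⟩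
  · have hd := g2_den_pos r h0
    constructor
    · apply div_pos _ hd
      nlinarith [sq_nonneg (r+1), mul_pos (mul_pos (pow_pos (by linarith : (0:ℝ) < 1 - r) 3) (pow_pos (by linarith : (0:ℝ) < r + 1) 2)) (by nlinarith : (0:ℝ) < r^2 + r + 1)]
    · rw [g2, div_lt_iff₀ hd]
      nlinarith [pow_pos h0 3, pow_pos h0 5, pow_pos h0 7]
  · have hc : ContinuousAt g2 0 := by
      apply ContinuousAt.div
      · fun_prop
      · fun_prop
      · norm_num
    have h0 : g2 0 = 4 := by norm_num [g2]
    exact h0 ▸ hc.continuousWithinAt.tendsto
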